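/- Let C be an n×m ordinal matrix (every row has distinct entries, and for all distinct i,j ∈ [n] and k ∈ [m]\[n], c_{i,i} < c_{i,k} < c_{i,j}), and let O be an ordinal basis of C (|O| = n and for every column j ∈ [m] there is a row i with min_{l∈O} c_{i,l} ≥ c_{i,j}). Then for every column j ∈ O there is a unique row i ∈ [n] with min_{l∈O} c_{i,l} = c_{i,j}, and distinct columns of O are 'disliked' by distinct rows; i.e., the disliked relation is a bijection between [n] and O. -/
import Mathlib


/-- `C` is an ordinal matrix: every row has pairwise distinct entries and for all
distinct rows `i, j` and every column `k` with index at least `n`,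
`c_{i,i} < c_{i,k} < c_{i,j}`. -/
def IsOrdinalMatrix {n m : ℕ} (hnm : n ≤ m) (C : Matrix (Fin n) (Fin m) ℝ) : Prop :=
  (∀ i : Fin n, ∀ j k : Fin m, j ≠ k → C i j ≠ C i k) ∧
  (∀ i j : Fin n, i ≠ j → ∀ k : Fin m, n ≤ (k : ℕ) →
    C i (Fin.castLE hnm i) < C i k ∧ C i k < C i (Fin.castLE hnm j))

/-- For an ordinal matrix `C` and an ordinal basis `O` (|O| = n and every column is
not strictly dominated, i.e. for each column `j` some row `i` has
`min_{l ∈ O} c_{i,l} ≥ c_{i,j}`), every column `j ∈ O` is disliked by a unique row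
(`min_{l∈O} c_{i,l} = c_{i,j}`), and distinct columns of `O` are disliked by distinct
rows: the disliked relation is a bijection between rows and `O`. -/
theorem disliked_relation_bijection {n m : ℕ} (hnm : n ≤ m)
    (C : Matrix (Fin n) (Fin m) ℝ) (hC : IsOrdinalMatrix hnm C)
    (O : Finset (Fin m)) (hOne : O.Nonempty) (hOcard : O.card = n)
    (hOdom : ∀ j : Fin m, ∃ i : Fin n, C i j ≤ O.inf' hOne (fun l => C i l)) :
    (∀ j ∈ O, ∃! i : Fin n, O.inf' hOne (fun l => C i l) = C i j) ∧
    (∀ j ∈ O, ∀ j' ∈ O, ∀ i : Fin n,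
      O.inf' hOne (fun l => C i l) = C i j →
      O.inf' hOne (fun l => C i l) = C i j' → j = j') := by
  obtain ⟨hrow, -⟩ := hC
  -- each row dislikes a unique column of O
  have hcol : ∀ i : Fin n, ∀ j ∈ O, ∀ j' ∈ O,
      O.inf' hOne (fun l => C i l) = C i j →
      O.inf' hOne (fun l => C i l) = C i j' → j = j' := by
    intro i j hj j' hj' h1 h2
    by_contra hne
    exact hrow i j j' hne (h1 ▸ h2)
  -- every column of O is disliked by some row
  have hex : ∀ j ∈ O, ∃ i : Fin n, O.inf' hOne (fun l => C i l) = C i j := by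
    intro j hj
    obtain ⟨i, hi⟩ := hOdom j
    exact ⟨i, le_antisymm (Finset.inf'_le _ hj) hi⟩
  have hargmin : ∀ i : Fin n, ∃ j ∈ O, O.inf' hOne (fun l => C i l) = C i j :=
    fun i => Finset.exists_mem_eq_inf' hOne _
  choose d hdmem hdval using hargmin
  set d' : Fin n → {x // x ∈ O} := fun i => ⟨d i, hdmem i⟩ with hd'
  have hsurj : Function.Surjective d' := by
    rintro ⟨j, hj⟩
    obtain ⟨i, hi⟩ := hex j hj
    exact ⟨i, Subtype.ext (hcol i _ (hdmem i) j hj (hdval i) hi)⟩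
  have hcard : Fintype.card (Fin n) = Fintype.card {x // x ∈ O} := by
    simp [Fintype.card_coe, hOcard]
  have hinj : Function.Injective d' :=
    ((Fintype.bijective_iff_surjective_and_card d').mpr ⟨hsurj, hcard⟩).1
  refine ⟨?_, fun j hj j' hj' i h1 h2 => hcol i j hj j' hj' h1 h2⟩
  intro j hj
  obtain ⟨i, hi⟩ := hex j hj
  refine ⟨i, hi, fun i' hi' => ?_⟩
  have e1 : d i' = j := hcol i' _ (hdmem i') j hj (hdval i') hi'
  have e2 : d i = j := hcol i _ (hdmem i) j hj (hdval i) hi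
  exact hinj (Subtype.ext (e1.trans e2.symm))
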